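/- At each of the two points (π, arccos((1+√6)/5), (1/2)·arccos(1/(1−√6))) and (0, arccos((1+√6)/5), π − (1/2)·arccos(1/(1−√6))), the gradient of L₁ vanishes, L₁ takes the value (3/50)·(9−√6), and the Hessian matrix of L₁ has both a strictly positive and a strictly negative eigenvalue; hence these points are saddle points of L₁. -/

import Mathlib

open Matrix

/-- The kinematic landscape function `L₁(Ω,β₁,β₂)`. -/
noncomputable def L1 (Ω β₁ β₂ : ℝ) : ℝ :=
  (1/8) * Real.sin β₂ ^ 2 * (3 + Real.cos (2*β₁))
  + (1/2) * Real.sin β₁ ^ 2 * Real.cos β₂ ^ 2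
  - (1/2) * Real.cos Ω * Real.sin β₁ * Real.sin (β₁/2) ^ 2 * Real.sin (2*β₂)

/-- `L₁` as a function on `ℝ³`. -/
noncomputable def L1v (v : Fin 3 → ℝ) : ℝ := L1 (v 0) (v 1) (v 2)

/-- Hessian matrix of second partial derivatives of `f : ℝⁿ → ℝ` at `p`. -/
noncomputable def hessian {n : ℕ} (f : (Fin n → ℝ) → ℝ) (p : Fin n → ℝ) :
    Matrix (Fin n) (Fin n) ℝ :=
  Matrix.of fun i j => fderiv ℝ (fun y => fderiv ℝ f y (Pi.single j 1)) p (Pi.single i 1)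

namespace Stmt8Aux

noncomputable def pr (i : Fin 3) : (Fin 3 → ℝ) →L[ℝ] ℝ := ContinuousLinearMap.proj i

noncomputable def g3 (x : ℝ) : ℝ := Real.sin x * Real.sin (x/2)^2
noncomputable def Gf (x : ℝ) : ℝ :=
  Real.cos x * Real.sin (x/2)^2 + Real.sin x * (Real.sin (x/2) * Real.cos (x/2))
noncomputable def Gf' (x : ℝ) : ℝ :=
  -Real.sin x * Real.sin (x/2)^2 + 2*Real.cos x * (Real.sin (x/2) * Real.cos (x/2))
  + Real.sin x * ((Real.cos (x/2)^2 - Real.sin (x/2)^2)/2)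

noncomputable def D0 (v : Fin 3 → ℝ) : ℝ := Real.sin (v 0) * g3 (v 1) * (Real.sin (2*v 2)/2)
noncomputable def D1 (v : Fin 3 → ℝ) : ℝ :=
  (-Real.sin (2*v 1)/4) * Real.sin (v 2)^2 + (Real.sin (v 1) * Real.cos (v 1)) * Real.cos (v 2)^2
  + Real.cos (v 0) * Gf (v 1) * (-Real.sin (2*v 2)/2)
noncomputable def D2 (v : Fin 3 → ℝ) : ℝ :=
  (3 + Real.cos (2*v 1)) * (Real.sin (v 2) * Real.cos (v 2)/4)
  + Real.sin (v 1)^2 * (-(Real.sin (v 2) * Real.cos (v 2)))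
  + Real.cos (v 0) * g3 (v 1) * (-Real.cos (2*v 2))

lemma hd_two_mul (x : ℝ) : HasDerivAt (fun y : ℝ => 2*y) 2 x := by
  simpa using (hasDerivAt_id x).const_mul (2:ℝ)

lemma hd_half (x : ℝ) : HasDerivAt (fun y : ℝ => y/2) (1/2) x := by
  simpa using (hasDerivAt_id x).div_const (2:ℝ)

lemma hd_sin2 (x : ℝ) : HasDerivAt (fun y : ℝ => Real.sin (2*y)) (2*Real.cos (2*x)) x := by
  have h := (Real.hasDerivAt_sin (2*x)).comp x (hd_two_mul x)
  exact h.congr_deriv (by ring)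

lemma hd_cos2 (x : ℝ) : HasDerivAt (fun y : ℝ => Real.cos (2*y)) (-(2*Real.sin (2*x))) x := by
  have h := (Real.hasDerivAt_cos (2*x)).comp x (hd_two_mul x)
  exact h.congr_deriv (by ring)

lemma hd_sinh (x : ℝ) : HasDerivAt (fun y : ℝ => Real.sin (y/2)) (Real.cos (x/2)/2) x := by
  have h := (Real.hasDerivAt_sin (x/2)).comp x (hd_half x)
  exact h.congr_deriv (by ring)

lemma hd_cosh (x : ℝ) : HasDerivAt (fun y : ℝ => Real.cos (y/2)) (-Real.sin (x/2)/2) x := by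
  have h := (Real.hasDerivAt_cos (x/2)).comp x (hd_half x)
  exact h.congr_deriv (by ring)

lemma hd_sin_sq (x : ℝ) : HasDerivAt (fun y : ℝ => Real.sin y ^ 2) (2*(Real.sin x*Real.cos x)) x := by
  have h := (Real.hasDerivAt_sin x).pow 2
  exact h.congr_deriv (by push_cast; ring)

lemma hd_cos_sq (x : ℝ) : HasDerivAt (fun y : ℝ => Real.cos y ^ 2) (-(2*(Real.sin x*Real.cos x))) x := by
  have h := (Real.hasDerivAt_cos x).pow 2
  exact h.congr_deriv (by push_cast; ring)

lemma hd_sinh_sq (x : ℝ) :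
    HasDerivAt (fun y : ℝ => Real.sin (y/2) ^ 2) (Real.sin (x/2)*Real.cos (x/2)) x := by
  have h := (hd_sinh x).pow 2
  exact h.congr_deriv (by push_cast; ring)

lemma hd_g3 (x : ℝ) : HasDerivAt g3 (Gf x) x := by
  unfold g3 Gf
  exact (Real.hasDerivAt_sin x).mul (hd_sinh_sq x)

lemma hd_Gf (x : ℝ) : HasDerivAt Gf (Gf' x) x := by
  unfold Gf
  have h := ((Real.hasDerivAt_cos x).mul (hd_sinh_sq x)).add
    ((Real.hasDerivAt_sin x).mul ((hd_sinh x).mul (hd_cosh x)))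
  unfold Gf'
  exact h.congr_deriv (by simp only [Pi.mul_apply]; ring)

lemma hd_sincos (x : ℝ) :
    HasDerivAt (fun y : ℝ => Real.sin y * Real.cos y) (Real.cos x^2 - Real.sin x^2) x := by
  have h := (Real.hasDerivAt_sin x).mul (Real.hasDerivAt_cos x)
  exact h.congr_deriv (by ring)

lemma hd_3pcos2 (x : ℝ) :
    HasDerivAt (fun y : ℝ => 3 + Real.cos (2*y)) (-(2*Real.sin (2*x))) x := by
  exact (hd_cos2 x).const_add 3

lemma tri {a b c : ℝ → ℝ} {a' b' c' : ℝ} (y : Fin 3 → ℝ)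
    (ha : HasDerivAt a a' (y 0)) (hb : HasDerivAt b b' (y 1)) (hc : HasDerivAt c c' (y 2)) :
    HasFDerivAt (fun v : Fin 3 → ℝ => a (v 0) * b (v 1) * c (v 2))
      ((a' * (b (y 1) * c (y 2))) • pr 0 + ((b' * (a (y 0) * c (y 2))) • pr 1 +
        (c' * (a (y 0) * b (y 1))) • pr 2)) y := by
  have h0 : HasFDerivAt (fun v : Fin 3 → ℝ => a (v 0)) (a' • pr 0) y :=
    ha.comp_hasFDerivAt y (pr 0).hasFDerivAt
  have h1 : HasFDerivAt (fun v : Fin 3 → ℝ => b (v 1)) (b' • pr 1) y :=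
    hb.comp_hasFDerivAt y (pr 1).hasFDerivAt
  have h2 : HasFDerivAt (fun v : Fin 3 → ℝ => c (v 2)) (c' • pr 2) y :=
    hc.comp_hasFDerivAt y (pr 2).hasFDerivAt
  have h := (h0.mul h1).mul h2
  refine h.congr_fderiv ?_
  refine ContinuousLinearMap.ext fun w => ?_
  simp [pr]
  ring

end Stmt8Aux

namespace Stmt8Aux

lemma hasF_L1v (y : Fin 3 → ℝ) :
    HasFDerivAt L1v (D0 y • pr 0 + (D1 y • pr 1 + D2 y • pr 2)) y := by
  have t1 := tri y (hasDerivAt_const (y 0) (1:ℝ)) (hd_3pcos2 (y 1)) ((hd_sin_sq (y 2)).div_const 8)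
  have t2 := tri y (hasDerivAt_const (y 0) (1:ℝ)) (hd_sin_sq (y 1)) ((hd_cos_sq (y 2)).div_const 2)
  have t3 := tri y (Real.hasDerivAt_cos (y 0)) (hd_g3 (y 1)) (((hd_sin2 (y 2)).neg).div_const 2)
  have h := (t1.add t2).add t3
  have hfun : L1v = (fun v : Fin 3 → ℝ =>
      (fun _ : ℝ => (1:ℝ)) (v 0) * (fun x : ℝ => 3 + Real.cos (2*x)) (v 1) *
        (fun x : ℝ => Real.sin x ^ 2 / 8) (v 2)
      + (fun _ : ℝ => (1:ℝ)) (v 0) * (fun x : ℝ => Real.sin x ^ 2) (v 1) *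
        (fun x : ℝ => Real.cos x ^ 2 / 2) (v 2)
      + Real.cos (v 0) * g3 (v 1) * (fun x : ℝ => -Real.sin (2*x) / 2) (v 2)) := by
    funext v
    simp only [L1v, L1, g3]
    ring
  rw [hfun]
  refine h.congr_fderiv ?_
  refine ContinuousLinearMap.ext fun w => ?_
  simp [pr, D0, D1, D2, g3, Gf]
  ring

lemma hasF_D0 (y : Fin 3 → ℝ) :
    HasFDerivAt D0
      ((Real.cos (y 0) * g3 (y 1) * (Real.sin (2*y 2)/2)) • pr 0 +
        ((Real.sin (y 0) * Gf (y 1) * (Real.sin (2*y 2)/2)) • pr 1 +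
          (Real.sin (y 0) * g3 (y 1) * Real.cos (2*y 2)) • pr 2)) y := by
  have t := tri y (Real.hasDerivAt_sin (y 0)) (hd_g3 (y 1)) ((hd_sin2 (y 2)).div_const 2)
  have hfun : D0 = (fun v : Fin 3 → ℝ =>
      Real.sin (v 0) * g3 (v 1) * (fun x : ℝ => Real.sin (2*x) / 2) (v 2)) := by
    funext v; simp only [D0]
  rw [hfun]
  refine t.congr_fderiv ?_
  refine ContinuousLinearMap.ext fun w => ?_
  simp [pr]
  ring

lemma hasF_D1 (y : Fin 3 → ℝ) :
    HasFDerivAt D1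
      (((-Real.sin (y 0)) * Gf (y 1) * (-Real.sin (2*y 2)/2)) • pr 0 +
        (((-Real.cos (2*y 1)/2) * Real.sin (y 2)^2
            + (Real.cos (y 1)^2 - Real.sin (y 1)^2) * Real.cos (y 2)^2
            + Real.cos (y 0) * Gf' (y 1) * (-Real.sin (2*y 2)/2)) • pr 1 +
          ((-Real.sin (2*y 1)/4) * (2*(Real.sin (y 2)*Real.cos (y 2)))
            + (Real.sin (y 1) * Real.cos (y 1)) * (-(2*(Real.sin (y 2)*Real.cos (y 2))))
            + Real.cos (y 0) * Gf (y 1) * (-Real.cos (2*y 2))) • pr 2)) y := by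
  have t1 := tri y (hasDerivAt_const (y 0) (1:ℝ))
    (((hd_sin2 (y 1)).neg).div_const 4) (hd_sin_sq (y 2))
  have t2 := tri y (hasDerivAt_const (y 0) (1:ℝ)) (hd_sincos (y 1)) (hd_cos_sq (y 2))
  have t3 := tri y (Real.hasDerivAt_cos (y 0)) (hd_Gf (y 1)) (((hd_sin2 (y 2)).neg).div_const 2)
  have h := (t1.add t2).add t3
  have hfun : D1 = (fun v : Fin 3 → ℝ =>
      (fun _ : ℝ => (1:ℝ)) (v 0) * (fun x : ℝ => -Real.sin (2*x) / 4) (v 1) *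
        (fun x : ℝ => Real.sin x ^ 2) (v 2)
      + (fun _ : ℝ => (1:ℝ)) (v 0) * (fun x : ℝ => Real.sin x * Real.cos x) (v 1) *
        (fun x : ℝ => Real.cos x ^ 2) (v 2)
      + Real.cos (v 0) * Gf (v 1) * (fun x : ℝ => -Real.sin (2*x) / 2) (v 2)) := by
    funext v
    simp only [D1]
    ring
  rw [hfun]
  refine h.congr_fderiv ?_
  refine ContinuousLinearMap.ext fun w => ?_
  simp [pr]
  ring

lemma hasF_D2 (y : Fin 3 → ℝ) :
    HasFDerivAt D2
      (((-Real.sin (y 0)) * g3 (y 1) * (-Real.cos (2*y 2))) • pr 0 +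
        (((-(2*Real.sin (2*y 1))) * (Real.sin (y 2)*Real.cos (y 2)/4)
            + (2*(Real.sin (y 1)*Real.cos (y 1))) * (-(Real.sin (y 2)*Real.cos (y 2)))
            + Real.cos (y 0) * Gf (y 1) * (-Real.cos (2*y 2))) • pr 1 +
          ((3 + Real.cos (2*y 1)) * ((Real.cos (y 2)^2 - Real.sin (y 2)^2)/4)
            + Real.sin (y 1)^2 * (-(Real.cos (y 2)^2 - Real.sin (y 2)^2))
            + Real.cos (y 0) * g3 (y 1) * (2*Real.sin (2*y 2))) • pr 2)) y := by
  have t1 := tri y (hasDerivAt_const (y 0) (1:ℝ)) (hd_3pcos2 (y 1)) ((hd_sincos (y 2)).div_const 4)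
  have t2 := tri y (hasDerivAt_const (y 0) (1:ℝ)) (hd_sin_sq (y 1)) ((hd_sincos (y 2)).neg)
  have t3 := tri y (Real.hasDerivAt_cos (y 0)) (hd_g3 (y 1)) ((hd_cos2 (y 2)).neg)
  have h := (t1.add t2).add t3
  have hfun : D2 = (fun v : Fin 3 → ℝ =>
      (fun _ : ℝ => (1:ℝ)) (v 0) * (fun x : ℝ => 3 + Real.cos (2*x)) (v 1) *
        (fun x : ℝ => Real.sin x * Real.cos x / 4) (v 2)
      + (fun _ : ℝ => (1:ℝ)) (v 0) * (fun x : ℝ => Real.sin x ^ 2) (v 1) *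
        (fun x : ℝ => -(Real.sin x * Real.cos x)) (v 2)
      + Real.cos (v 0) * g3 (v 1) * (fun x : ℝ => -Real.cos (2*x)) (v 2)) := by
    funext v
    simp only [D2]
    ring
  rw [hfun]
  refine h.congr_fderiv ?_
  refine ContinuousLinearMap.ext fun w => ?_
  simp [pr]
  ring

lemma fderiv_L1v (y : Fin 3 → ℝ) :
    fderiv ℝ L1v y = D0 y • pr 0 + (D1 y • pr 1 + D2 y • pr 2) := (hasF_L1v y).fderiv

lemma part0 : (fun y => fderiv ℝ L1v y (Pi.single (0 : Fin 3) 1)) = D0 := by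
  funext y
  rw [fderiv_L1v]
  simp [pr, Pi.single_apply]

lemma part1 : (fun y => fderiv ℝ L1v y (Pi.single (1 : Fin 3) 1)) = D1 := by
  funext y
  rw [fderiv_L1v]
  simp [pr, Pi.single_apply]

lemma part2 : (fun y => fderiv ℝ L1v y (Pi.single (2 : Fin 3) 1)) = D2 := by
  funext y
  rw [fderiv_L1v]
  simp [pr, Pi.single_apply]

end Stmt8Aux

namespace Stmt8Aux

lemma saddle_aux {h a b d : ℝ} (hh : h < 0) (hb : b ≠ 0) (hneg : a*d - b^2 < 0) :
    (∃ (c : ℝ) (v : Fin 3 → ℝ), 0 < c ∧ v ≠ 0 ∧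
        (!![h,0,0;0,a,b;0,b,d]).mulVec v = c • v)
    ∧ (∃ (c : ℝ) (v : Fin 3 → ℝ), c < 0 ∧ v ≠ 0 ∧
        (!![h,0,0;0,a,b;0,b,d]).mulVec v = c • v) := by
  constructor
  · have hd0 : (0:ℝ) ≤ (a+d)^2 - 4*(a*d - b^2) := by nlinarith [sq_nonneg (a-d)]
    set R := Real.sqrt ((a+d)^2 - 4*(a*d-b^2)) with hRdef
    have hR2 : R^2 = (a+d)^2 - 4*(a*d-b^2) := Real.sq_sqrt hd0
    have habs : |a+d| < R := by
      rw [← Real.sqrt_sq_eq_abs]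
      exact Real.sqrt_lt_sqrt (sq_nonneg _) (by linarith)
    have hpos : 0 < (a+d+R)/2 := by
      have h1 := neg_abs_le (a+d)
      linarith
    refine ⟨(a+d+R)/2, ![0, b, (a+d+R)/2 - a], hpos, ?_, ?_⟩
    · intro hv
      apply hb
      have := congrFun hv 1
      simpa using this
    · funext i
      fin_cases i
      · simp [Matrix.mulVec, dotProduct, Fin.sum_univ_three]
      · simp [Matrix.mulVec, dotProduct, Fin.sum_univ_three]
        ring
      · simp [Matrix.mulVec, dotProduct, Fin.sum_univ_three]
        linear_combination (-1/4) * hR2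
  · refine ⟨h, ![1,0,0], hh, ?_, ?_⟩
    · intro hv
      have := congrFun hv 0
      simp at this
    · funext i
      fin_cases i <;> simp [Matrix.mulVec, dotProduct, Fin.sum_univ_three]

end Stmt8Aux


namespace Stmt8Aux

lemma main (p : Fin 3 → ℝ) (e : ℝ) (he : e^2 = 1)
    (h0s : Real.sin (p 0) = 0) (h0c : Real.cos (p 0) = e)
    (h1 : p 1 = Real.arccos ((1 + Real.sqrt 6)/5))
    (hs2 : Real.sin (2 * p 2) = -e * Real.sqrt (1 - ((1 + Real.sqrt 6)/5)^2))
    (hc2 : Real.cos (2 * p 2) = -((1 + Real.sqrt 6)/5)) :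
    fderiv ℝ L1v p = 0 ∧ L1v p = (3/50) * (9 - Real.sqrt 6)
    ∧ (∃ (c : ℝ) (v : Fin 3 → ℝ), 0 < c ∧ v ≠ 0 ∧ (hessian L1v p).mulVec v = c • v)
    ∧ (∃ (c : ℝ) (v : Fin 3 → ℝ), c < 0 ∧ v ≠ 0 ∧ (hessian L1v p).mulVec v = c • v) := by
  set q := Real.sqrt 6 with hqdef
  set s := Real.sqrt (1 - ((1 + q)/5)^2) with hsdef
  have h6 : q^2 = 6 := Real.sq_sqrt (by norm_num)
  have hq0 : 0 ≤ q := Real.sqrt_nonneg 6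
  have hq2 : 2 < q := by nlinarith
  have hq3 : q < 5/2 := by nlinarith
  have hs : s^2 = 1 - ((1 + q)/5)^2 := Real.sq_sqrt (by nlinarith)
  have hc1 : Real.cos (p 1) = (1 + q)/5 := by
    rw [h1]; exact Real.cos_arccos (by nlinarith) (by nlinarith)
  have hs1 : Real.sin (p 1) = s := by rw [h1, Real.sin_arccos]
  have hhalf : 2 * (p 1 / 2) = p 1 := by ring
  have hu2 : Real.sin (p 1/2)^2 = (1 - (1 + q)/5)/2 := by
    rw [Real.sin_sq_eq_half_sub, hhalf, hc1]; ring
  have hw2 : Real.cos (p 1/2)^2 = (1 + (1 + q)/5)/2 := by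
    rw [Real.cos_sq, hhalf, hc1]; ring
  have huw : Real.sin (p 1/2) * Real.cos (p 1/2) = s/2 := by
    have h := Real.sin_two_mul (p 1/2)
    rw [hhalf, hs1] at h
    linarith
  have hs21 : Real.sin (2*p 1) = 2*s*((1 + q)/5) := by
    rw [Real.sin_two_mul, hs1, hc1]
  have hc21 : Real.cos (2*p 1) = 2*((1 + q)/5)^2 - 1 := by
    rw [Real.cos_two_mul, hc1]
  have hc2sq : Real.cos (p 2)^2 = (1 - (1 + q)/5)/2 := by
    rw [Real.cos_sq, hc2]; ring
  have hs2sq : Real.sin (p 2)^2 = (1 + (1 + q)/5)/2 := by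
    have h := Real.sin_sq_add_cos_sq (p 2)
    rw [hc2sq] at h
    linarith
  have hsc2 : Real.sin (p 2) * Real.cos (p 2) = -e*s/2 := by
    have h := Real.sin_two_mul (p 2)
    rw [hs2] at h
    linarith
  -- gradient components vanish
  have hD0v : D0 p = 0 := by
    simp only [D0]
    rw [h0s]
    ring
  have hD1v : D1 p = 0 := by
    simp only [D1, Gf]
    rw [h0c, hs21, hs1, hc1, hu2, huw, hs2sq, hc2sq, hs2]
    linear_combination ((1/4)*s*e^2) * hs + (-(3/100)*s - (1/50)*s*e^2) * h6
      + ((4/25)*s + (1/100)*s*q) * he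
  have hD2v : D2 p = 0 := by
    simp only [D2, g3]
    rw [h0c, hc21, hs1, hu2, hsc2, hc2]
    linear_combination ((1/2)*s*e) * hs + (-(1/20)*s*e) * h6
  refine ⟨?_, ?_, ?_⟩
  · rw [fderiv_L1v p, hD0v, hD1v, hD2v]
    simp
  · simp only [L1v, L1]
    rw [h0c, hc21, hs1, hu2, hs2sq, hc2sq, hs2]
    linear_combination ((1/5) + (1/5)*e^2 - (1/20)*q - (1/20)*q*e^2) * hs
      + ((1/250) - (1/250)*e^2 + (3/1000)*q + (1/500)*q*e^2) * h6
      + ((21/125) - (13/250)*q) * he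
  -- Hessian
  have hcol0 : ∀ i : Fin 3, hessian L1v p i 0 = fderiv ℝ D0 p (Pi.single i 1) := by
    intro i
    show fderiv ℝ (fun y => fderiv ℝ L1v y (Pi.single (0:Fin 3) 1)) p (Pi.single i 1) = _
    rw [part0]
  have hcol1 : ∀ i : Fin 3, hessian L1v p i 1 = fderiv ℝ D1 p (Pi.single i 1) := by
    intro i
    show fderiv ℝ (fun y => fderiv ℝ L1v y (Pi.single (1:Fin 3) 1)) p (Pi.single i 1) = _
    rw [part1]
  have hcol2 : ∀ i : Fin 3, hessian L1v p i 2 = fderiv ℝ D2 p (Pi.single i 1) := by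
    intro i
    show fderiv ℝ (fun y => fderiv ℝ L1v y (Pi.single (2:Fin 3) 1)) p (Pi.single i 1) = _
    rw [part2]
  have hmat : hessian L1v p =
      !![-((42 - 13*q)/250), 0, 0;
         0, (23*q - 32)/100, e*((8+13*q)/50);
         0, e*((8+13*q)/50), (q-4)/5] := by
    ext i j
    fin_cases j
    · rw [show (⟨0, by norm_num⟩ : Fin 3) = 0 from rfl, hcol0 i, (hasF_D0 p).fderiv]
      fin_cases i
      · simp [pr, Pi.single_apply]
        simp only [g3]
        rw [h0c, hs1, hu2, hs2]
        linear_combination (-(1/5)*e^2 + (1/20)*q*e^2) * hs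
          + ((1/250)*e^2 - (1/500)*q*e^2) * h6 + (-(21/125) + (13/250)*q) * he
      · simp [pr, Pi.single_apply, h0s, Matrix.vecHead, Matrix.vecTail]
      · simp [pr, Pi.single_apply, h0s, Matrix.vecHead, Matrix.vecTail]
    · rw [show (⟨1, by norm_num⟩ : Fin 3) = 1 from rfl, hcol1 i, (hasF_D1 p).fderiv]
      fin_cases i
      · simp [pr, Pi.single_apply, h0s, Matrix.vecHead, Matrix.vecTail]
      · simp [pr, Pi.single_apply]
        simp only [Gf']
        rw [h0c, hc21, hs1, hc1, hu2, hw2, huw, hs2sq, hc2sq, hs2]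
        linear_combination (-(2/5) - (1/20)*e^2 + (1/10)*q + (1/5)*q*e^2) * hs
          + (-(2/125) - (7/500)*e^2 - (3/250)*q - (1/125)*q*e^2) * h6
          + (-(33/250) + (37/250)*q) * he
      · simp [pr, Pi.single_apply]
        simp only [Gf]
        rw [h0c, hs21, hs1, hc1, hu2, huw, hsc2, hc2]
        linear_combination ((2/5)*e + (2/5)*q*e) * hs + (-(1/25)*e - (1/50)*q*e) * h6
    · rw [show (⟨2, by norm_num⟩ : Fin 3) = 2 from rfl, hcol2 i, (hasF_D2 p).fderiv]
      fin_cases i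
      · simp [pr, Pi.single_apply, h0s, Matrix.vecHead, Matrix.vecTail]
      · simp [pr, Pi.single_apply]
        simp only [Gf]
        rw [h0c, hs21, hs1, hc1, hu2, huw, hsc2, hc2]
        linear_combination ((2/5)*e + (2/5)*q*e) * hs + (-(1/25)*e - (1/50)*q*e) * h6
      · simp [pr, Pi.single_apply]
        simp only [g3]
        rw [h0c, hc21, hs1, hu2, hs2sq, hc2sq, hs2]
        linear_combination ((1/5) - (4/5)*e^2 + (1/5)*q + (1/5)*q*e^2) * hs
          + (-(9/250) + (2/125)*e^2 - (3/250)*q - (1/125)*q*e^2) * h6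
          + (-(84/125) + (26/125)*q) * he
  rw [hmat]
  have he0 : e ≠ 0 := by
    intro h
    rw [h] at he
    norm_num at he
  apply saddle_aux
  · linarith
  · exact mul_ne_zero he0 (by positivity)
  · have hdet : (23*q - 32)/100 * ((q-4)/5) - (e*((8+13*q)/50))^2 = (252 - 828*q)/2500 := by
      linear_combination ((23/500) - (169/2500)*e^2) * h6 + (-(539/1250) - (52/625)*q) * he
    rw [hdet]
    linarith

end Stmt8Aux

namespace Stmt8Aux

lemma sqrt6_sq : Real.sqrt 6 ^ 2 = 6 := Real.sq_sqrt (by norm_num)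

lemma sqrt6_gt : 2 < Real.sqrt 6 := by
  nlinarith [sqrt6_sq, Real.sqrt_nonneg 6]

lemma sqrt6_lt : Real.sqrt 6 < 5/2 := by
  nlinarith [sqrt6_sq, Real.sqrt_nonneg 6]

lemma harccos : Real.arccos (1/(1 - Real.sqrt 6)) =
    Real.pi - Real.arccos ((1 + Real.sqrt 6)/5) := by
  have hx : (1:ℝ)/(1 - Real.sqrt 6) = -((1 + Real.sqrt 6)/5) := by
    have hne : (1:ℝ) - Real.sqrt 6 ≠ 0 := ne_of_lt (by linarith [sqrt6_gt])
    field_simp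
    nlinarith [sqrt6_sq]
  rw [hx, Real.arccos_neg]

lemma hcosB : Real.cos (Real.arccos ((1 + Real.sqrt 6)/5)) = (1 + Real.sqrt 6)/5 :=
  Real.cos_arccos (by nlinarith [sqrt6_gt]) (by nlinarith [sqrt6_lt])

end Stmt8Aux


open Real in
/-- at the two listed points the gradient of L₁ vanishes, L₁ = (3/50)·(9−√6), and the Hessian has both a strictly positive and a strictly negative eigenvalue: these are saddle points. -/
theorem stmt8 (p : Fin 3 → ℝ)
    (hp : p = ![π, arccos ((1 + Real.sqrt 6)/5), (1/2) * arccos (1/(1 - Real.sqrt 6))]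
      ∨ p = ![0, arccos ((1 + Real.sqrt 6)/5), π - (1/2) * arccos (1/(1 - Real.sqrt 6))]) :
    -- the gradient of L₁ vanishes at p
    fderiv ℝ L1v p = 0
    -- L₁ takes the value (3/50) * (9 - Real.sqrt 6) at p
    ∧ L1v p = (3/50) * (9 - Real.sqrt 6)
    -- the Hessian has a strictly positive eigenvalue
    ∧ (∃ (c : ℝ) (v : Fin 3 → ℝ), 0 < c ∧ v ≠ 0 ∧ (hessian L1v p).mulVec v = c • v)
    -- and a strictly negative eigenvalue (hence p is a saddle point)
    ∧ (∃ (c : ℝ) (v : Fin 3 → ℝ), c < 0 ∧ v ≠ 0 ∧ (hessian L1v p).mulVec v = c • v) := by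
  obtain h | h := hp
  · have h2p2 : 2 * p 2 = π - Real.arccos ((1 + Real.sqrt 6)/5) := by
      rw [h, ← Stmt8Aux.harccos]
      show 2 * ((1/2) * arccos (1/(1 - Real.sqrt 6))) = _
      ring
    refine Stmt8Aux.main p (-1) (by norm_num) ?_ ?_ ?_ ?_ ?_
    · rw [h]; show Real.sin π = 0; exact Real.sin_pi
    · rw [h]; show Real.cos π = -1; exact Real.cos_pi
    · rw [h]; rfl
    · rw [h2p2, Real.sin_pi_sub, Real.sin_arccos]
      ring
    · rw [h2p2, Real.cos_pi_sub, Stmt8Aux.hcosB]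
  · have h2p2 : 2 * p 2 = π + Real.arccos ((1 + Real.sqrt 6)/5) := by
      rw [h]
      show 2 * (π - (1/2) * arccos (1/(1 - Real.sqrt 6))) = _
      rw [Stmt8Aux.harccos]
      ring
    refine Stmt8Aux.main p 1 (by norm_num) ?_ ?_ ?_ ?_ ?_
    · rw [h]; show Real.sin 0 = 0; exact Real.sin_zero
    · rw [h]; show Real.cos 0 = 1; exact Real.cos_zero
    · rw [h]; rfl
    · rw [h2p2, Real.sin_add, Real.sin_pi, Real.cos_pi, Real.sin_arccos]
      ring
    · rw [h2p2, Real.cos_add, Real.sin_pi, Real.cos_pi, Stmt8Aux.hcosB]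
      ring
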